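/- Let (R, 𝔪) be a noetherian local ring all of whose associated prime ideals are minimal primes of R. Then Ass_R(\hat{R}/R) ⊆ Ass(R), where \hat{R} is the 𝔪-adic completion of R. In particular, if R is a noetherian local domain which is not complete (so R ⊊ \hat{R}), then Ass_R(\hat{R}/R) = {(0)}. -/

import Mathlib

open IsLocalRing
open scoped TensorProduct

section Aux

variable (R : Type) [CommRing R] [IsNoetherianRing R] [IsLocalRing R]

/-- Purity-type lemma: if `of r = a • x` in the completion, then `r ∈ (a)`. -/
lemma aux_mem_span_of_eq_smul (a r : R) (x : AdicCompletion (maximalIdeal R) R)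
    (hx : AdicCompletion.of (maximalIdeal R) R r = a • x) : r ∈ Ideal.span {a} := by
  set J : Ideal R := Ideal.span {a}
  have hKrull : (⨅ n : ℕ, (maximalIdeal R) ^ n • ⊤ : Submodule R (R ⧸ J)) = ⊥ :=
    Ideal.iInf_pow_smul_eq_bot_of_isLocalRing (I := maximalIdeal R) (M := R ⧸ J)
      (Ideal.IsMaximal.ne_top (maximalIdeal.isMaximal R))
  have hmem : ∀ n : ℕ, (Submodule.Quotient.mk r : R ⧸ J) ∈
      ((maximalIdeal R) ^ n • ⊤ : Submodule R (R ⧸ J)) := by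
    intro n
    obtain ⟨y, hy⟩ := Submodule.Quotient.mk_surjective _ (x.1 n)
    have h1 : (AdicCompletion.of (maximalIdeal R) R r).1 n = (a • x).1 n := by rw [hx]
    have h2 : Submodule.Quotient.mk (p := ((maximalIdeal R) ^ n • ⊤ : Submodule R R)) r
        = Submodule.Quotient.mk (a * y) := by
      have : (a • x).1 n = a • x.1 n := rfl
      rw [this, ← hy] at h1
      simpa [Submodule.Quotient.mk_smul, smul_eq_mul] using h1.trans (Submodule.Quotient.mk_smul _ a y).symm
    have h3 : r - a * y ∈ ((maximalIdeal R) ^ n • ⊤ : Submodule R R) := by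
      exact (Submodule.Quotient.eq _).mp h2
    have h4 : (Submodule.Quotient.mk (r - a * y) : R ⧸ J) ∈
        ((maximalIdeal R) ^ n • ⊤ : Submodule R (R ⧸ J)) := by
      have h4' := Submodule.mem_map_of_mem (f := J.mkQ) h3
      rw [Submodule.map_smul''] at h4'
      exact smul_mono_right _ (le_top (a := Submodule.map J.mkQ ⊤)) h4'
    have h5 : (Submodule.Quotient.mk (a * y) : R ⧸ J) = 0 := by
      rw [Submodule.Quotient.mk_eq_zero]
      exact Ideal.mul_mem_right _ _ (Ideal.subset_span rfl)
    have : (Submodule.Quotient.mk r : R ⧸ J)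
        = Submodule.Quotient.mk (r - a * y) + Submodule.Quotient.mk (a * y) := by
      rw [← Submodule.Quotient.mk_add]; ring_nf
    rw [this, h5, add_zero]
    exact h4
  have : (Submodule.Quotient.mk r : R ⧸ J) ∈
      (⨅ n : ℕ, (maximalIdeal R) ^ n • ⊤ : Submodule R (R ⧸ J)) :=
    Submodule.mem_iInf _ |>.mpr hmem
  rw [hKrull, Submodule.mem_bot] at this
  rwa [← Submodule.Quotient.mk_eq_zero (p := J)]

lemma aux_smul_regular (a : R) (ha : ∀ z : R, a • z = 0 → z = 0) :
    IsSMulRegular (AdicCompletion (maximalIdeal R) R) a := by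
  haveI : Module.Flat R (AdicCompletion (maximalIdeal R) R) :=
    (AdicCompletion.flat_of_isNoetherian (I := maximalIdeal R))
  have hR : IsSMulRegular R a := by
    intro z w hzw
    have h1 : a • z = a • w := hzw
    have h2 : a • (z - w) = 0 := by rw [smul_sub, h1, sub_self]
    exact sub_eq_zero.mp (ha _ h2)
  have ht : IsSMulRegular ((AdicCompletion (maximalIdeal R) R) ⊗[R] R) a :=
    hR.lTensor (AdicCompletion (maximalIdeal R) R)
  exact ht.of_injective
    (TensorProduct.rid R (AdicCompletion (maximalIdeal R) R)).symm.toLinearMap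
    (TensorProduct.rid R (AdicCompletion (maximalIdeal R) R)).symm.injective

end Aux

/-- Lemma 2.1 (ii): let `(R,𝔪)` be a noetherian local ring all of whose associated primes are
minimal primes.  Then `Ass_R (R̂/R) ⊆ Ass R`, where `R̂` is the `𝔪`-adic completion of `R`.
In particular, if `R` is a domain which is not complete (`R ⊊ R̂`), then
`Ass_R (R̂/R) = {(0)}`. -/
theorem associatedPrimes_completion_quotient_subset
    (R : Type) [CommRing R] [IsNoetherianRing R] [IsLocalRing R]
    (h : ∀ 𝔭 ∈ associatedPrimes R R, 𝔭 ∈ minimalPrimes R) :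
    associatedPrimes R
        ((AdicCompletion (maximalIdeal R) R) ⧸
          LinearMap.range (AdicCompletion.of (maximalIdeal R) R))
      ⊆ associatedPrimes R R
    ∧ (IsDomain R → ¬ Function.Surjective (AdicCompletion.of (maximalIdeal R) R) →
        associatedPrimes R
            ((AdicCompletion (maximalIdeal R) R) ⧸
              LinearMap.range (AdicCompletion.of (maximalIdeal R) R))
          = {⊥}) := by
  have hsub : associatedPrimes R
        ((AdicCompletion (maximalIdeal R) R) ⧸
          LinearMap.range (AdicCompletion.of (maximalIdeal R) R))
      ⊆ associatedPrimes R R := by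
    intro p hp
    obtain ⟨hprime, m, hm⟩ := isAssociatedPrime_iff.mp hp
    obtain ⟨x, rfl⟩ := Submodule.Quotient.mk_surjective _ m
    by_cases hz : (p : Set R) ⊆ {r : R | ∃ z : R, z ≠ 0 ∧ r • z = 0}
    · -- every element of p is a zerodivisor; prime avoidance
      have hz0 : (p : Set R) ⊆ ⋃ q ∈ associatedPrimes R R, (q : Set R) := by
        rw [biUnion_associatedPrimes_eq_zero_divisors]; exact hz
      have hfin : (associatedPrimes R R).Finite :=
        Set.Finite.subset (minimalPrimes.finite_of_isNoetherianRing R) h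
      have hz' : (p : Set R) ⊆ ⋃ i ∈ (↑hfin.toFinset : Set (Ideal R)), (id i : Ideal R) := by
        rw [Set.Finite.coe_toFinset]; exact hz0
      obtain ⟨q, hq, hpq⟩ := (Ideal.subset_union_prime (s := hfin.toFinset) (f := id) ⊥ ⊥
        (fun i hi _ _ => ((Set.Finite.mem_toFinset hfin).mp hi).isPrime)).mp hz'
      rw [Set.Finite.mem_toFinset] at hq
      obtain ⟨q', hq', hq'p⟩ := Ideal.exists_minimalPrimes_le (I := ⊥) (J := p) bot_le
      have hqmin : Minimal (fun I : Ideal R => I.IsPrime ∧ ⊥ ≤ I) q := h q hq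
      have hqq' : q ≤ q' := hqmin.2 hq'.1 (hq'p.trans hpq)
      have : p = q := le_antisymm hpq (hqq'.trans hq'p)
      rwa [this]
    · -- p contains a nonzerodivisor a
      rw [Set.not_subset] at hz
      obtain ⟨a, hap, ha⟩ := hz
      simp only [Set.mem_setOf_eq, not_exists, not_and] at ha
      have ha' : ∀ z : R, a • z = 0 → z = 0 := by
        intro z hz'
        by_contra hzz
        exact ha z hzz hz'
      have hap1 : a ∈ p := hap
      rw [hm] at hap1
      have hap2 := (Submodule.mem_bot R).mp (Submodule.mem_colon_singleton.mp hap1)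
      rw [← Submodule.Quotient.mk_smul, Submodule.Quotient.mk_eq_zero] at hap2
      obtain ⟨r, hr⟩ := hap2
      obtain ⟨s, hs⟩ := Ideal.mem_span_singleton'.mp (aux_mem_span_of_eq_smul R a r x hr)
      have : a • AdicCompletion.of (maximalIdeal R) R s = a • x := by
        rw [← hr, ← hs, ← map_smul]
        congr 1
        rw [smul_eq_mul, mul_comm]
      have hxr : x = AdicCompletion.of (maximalIdeal R) R s :=
        (aux_smul_regular R a ha' this).symm
      exfalso
      apply hprime.ne_top
      rw [hm]
      have : (Submodule.Quotient.mk x :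
          (AdicCompletion (maximalIdeal R) R) ⧸
            LinearMap.range (AdicCompletion.of (maximalIdeal R) R)) = 0 := by
        rw [Submodule.Quotient.mk_eq_zero, hxr]
        exact ⟨s, rfl⟩
      rw [this]; ext; simp [Submodule.mem_colon_singleton]
  refine ⟨hsub, fun hdom hnsurj => ?_⟩
  have hassR : associatedPrimes R R = {⊥} := by
    apply Set.eq_singleton_iff_unique_mem.mpr
    constructor
    · refine isAssociatedPrime_iff.mpr ⟨Ideal.isPrime_bot, 1, ?_⟩
      ext r
      rw [Submodule.mem_bot, Submodule.mem_colon_singleton, Submodule.mem_bot, smul_eq_mul, mul_one]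
    · rintro q hq0
      obtain ⟨hqprime, z, hq⟩ := isAssociatedPrime_iff.mp hq0
      have hz : z ≠ 0 := by
        rintro rfl
        apply hqprime.ne_top
        rw [hq]; ext; simp [Submodule.mem_colon_singleton]
      ext r
      simp only [Submodule.mem_bot, hq, Submodule.mem_colon_singleton, smul_eq_mul]
      exact ⟨fun hr => by simpa [hz] using mul_eq_zero.mp hr, fun hr => by rw [hr, zero_mul]⟩
  have hne : LinearMap.range (AdicCompletion.of (maximalIdeal R) R) < ⊤ := by
    rcases lt_or_eq_of_le (le_top (a := LinearMap.range (AdicCompletion.of (maximalIdeal R) R)))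
      with hlt | heq
    · exact hlt
    · exact absurd (LinearMap.range_eq_top.mp heq) hnsurj
  haveI := Submodule.Quotient.nontrivial_iff.mpr hne.ne
  have hnonempty := associatedPrimes.nonempty R
    ((AdicCompletion (maximalIdeal R) R) ⧸
      LinearMap.range (AdicCompletion.of (maximalIdeal R) R))
  apply Set.eq_singleton_iff_unique_mem.mpr
  constructor
  · obtain ⟨q, hq⟩ := hnonempty
    have := hsub hq
    rw [hassR] at this
    rwa [← this]
  · intro q hq
    have := hsub hq
    rwa [hassR] at this
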